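/- The graph G(Γ) satisfies ν_ac(G(Γ)) = n+m. -/

import Mathlib

open SimpleGraph

/-- The subgraph of `G` consisting of those pairs in `s` that are actually edges of `G`. -/
def pairsSubgraph {V : Type*} (G : SimpleGraph V) (s : Set (V × V)) : G.Subgraph where
  verts := {v | ∃ a b, (G.Adj a b ∧ ((a, b) ∈ s ∨ (b, a) ∈ s)) ∧ (v = a ∨ v = b)}
  Adj a b := G.Adj a b ∧ ((a, b) ∈ s ∨ (b, a) ∈ s)
  adj_sub h := h.1
  edge_vert h := ⟨_, _, h, Or.inl rfl⟩
  symm := ⟨fun _ _ h => ⟨h.1.symm, h.2.symm⟩⟩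

/-- `M` is an induced matching in `G`: it is a matching, and `G(M)`, the subgraph of `G`
induced by the set `V(M)` of covered vertices (which is `M.verts` for a matching subgraph),
is `1`-regular, i.e. every vertex of `G(M)` has exactly one neighbour in `G(M)`. -/
def IsInducedMatching {V : Type*} (G : SimpleGraph V) (M : G.Subgraph) : Prop :=
  M.IsMatching ∧ ∀ v : M.verts, ∃! w : M.verts, (G.induce M.verts).Adj v w

/-- `M` is an acyclic matching in `G`: it is a matching and `G(M)` is a forest. -/
def IsAcyclicMatching {V : Type*} (G : SimpleGraph V) (M : G.Subgraph) : Prop :=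
  M.IsMatching ∧ (G.induce M.verts).IsAcyclic

/-- `M` is a uniquely restricted matching in `G`: it is a matching and it is the unique
perfect matching of `G(M)`, i.e. the unique matching of `G` covering exactly `M.verts`. -/
def IsURMatching {V : Type*} (G : SimpleGraph V) (M : G.Subgraph) : Prop :=
  M.IsMatching ∧ ∀ M' : G.Subgraph, M'.IsMatching → M'.verts = M.verts → M' = M

/-- The (ordinary) matching number `ν(G)`: the maximum cardinality of a matching in `G`. -/
noncomputable def nuMatch {V : Type*} (G : SimpleGraph V) : ℕ :=
  sSup {k : ℕ | ∃ M : G.Subgraph, M.IsMatching ∧ M.edgeSet.ncard = k}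

/-- The uniquely restricted matching number `ν_ur(G)`. -/
noncomputable def nuUR {V : Type*} (G : SimpleGraph V) : ℕ :=
  sSup {k : ℕ | ∃ M : G.Subgraph, IsURMatching G M ∧ M.edgeSet.ncard = k}

/-- The acyclic matching number `ν_ac(G)`. -/
noncomputable def nuAc {V : Type*} (G : SimpleGraph V) : ℕ :=
  sSup {k : ℕ | ∃ M : G.Subgraph, IsAcyclicMatching G M ∧ M.edgeSet.ncard = k}

/-- The induced (strong) matching number `ν_s(G)`. -/
noncomputable def nuS {V : Type*} (G : SimpleGraph V) : ℕ :=
  sSup {k : ℕ | ∃ M : G.Subgraph, IsInducedMatching G M ∧ M.edgeSet.ncard = k}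

/-- `cyc` is an `M`-alternating cycle in `G`: a cycle of `G` whose edges alternate between
edges of `M` and edges of `E(G) \ M`. -/
def IsAltCycle {V : Type*} (G : SimpleGraph V) (M : G.Subgraph) {v : V}
    (cyc : G.Walk v v) : Prop :=
  cyc.IsCycle ∧ cyc.toSubgraph.spanningCoe.IsAlternating M.spanningCoe

/-- Vertices of the graph `G(Γ)` for the SATISFIABILITY instance `Γ` with `n` variables and `m`
clauses: `Sum.inl (i, 0) = t_i`, `Sum.inl (i, 1) = f_i`, `Sum.inl (i, 2) = u_i` are the vertices
of the triangle `X_i`; `Sum.inr (j, none) = v_j`, and `Sum.inr (j, some l)` is the vertex of the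
clique `C_j` identified with the literal `l` (it is isolated unless `l` belongs to `c_j`, so that
the clique `C_j` effectively has `|c_j| + 1` vertices). A literal `(i, true)` is `x_i` and a
literal `(i, false)` is `¬x_i`. -/
abbrev SatV (n m : ℕ) : Type := (Fin n × Fin 3) ⊕ (Fin m × Option (Fin n × Bool))

/-- The base relation for `G(Γ)`: all edges inside each triangle `X_i`, all edges inside each
clique `C_j`, an edge from `f_i` to every vertex identified with the literal `x_i`, and an edge
from `t_i` to every vertex identified with the literal `¬x_i`. -/
def satRel {n m : ℕ} (c : Fin m → Finset (Fin n × Bool)) : SatV n m → SatV n m → Prop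
  | Sum.inl (i, k), Sum.inl (i', k') => i = i' ∧ k ≠ k'
  | Sum.inr (j, o), Sum.inr (j', o') =>
      j = j' ∧ o ≠ o' ∧ (∀ l, o = some l → l ∈ c j) ∧ (∀ l, o' = some l → l ∈ c j)
  | Sum.inl (i, k), Sum.inr (j, o) =>
      (k = 1 ∧ o = some (i, true) ∧ (i, true) ∈ c j) ∨
      (k = 0 ∧ o = some (i, false) ∧ (i, false) ∈ c j)
  | Sum.inr _, Sum.inl _ => False

/-- The graph `G(Γ)` built from the SATISFIABILITY instance `Γ` whose clauses are given by `c`. -/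
def satGraph {n m : ℕ} (c : Fin m → Finset (Fin n × Bool)) : SimpleGraph (SatV n m) :=
  SimpleGraph.fromRel (satRel c)


section AuxGeneral
variable {V : Type*} {G : SimpleGraph V}

lemma triangle_isCycle {a b c : V} (hab : G.Adj a b) (hbc : G.Adj b c) (hca : G.Adj c a) :
    (Walk.cons hab (Walk.cons hbc (Walk.cons hca Walk.nil))).IsCycle := by
  have h1 : a ≠ b := hab.ne
  have h2 : b ≠ c := hbc.ne
  have h3 : c ≠ a := hca.ne
  rw [Walk.cons_isCycle_iff]
  constructor
  · simp [Walk.cons_isPath_iff, h2, h3, Ne.symm h3, Ne.symm h1, h1]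
  · simp only [Walk.edges_cons, Walk.edges_nil, List.mem_cons, List.not_mem_nil, or_false]
    push_neg
    constructor <;> · intro hh; rw [Sym2.eq_iff] at hh; tauto

lemma not_isAcyclic_of_triangle {a b c : V} (hab : G.Adj a b) (hbc : G.Adj b c)
    (hca : G.Adj c a) : ¬ G.IsAcyclic :=
  fun h => h _ (triangle_isCycle hab hbc hca)

lemma exists_two_neighbors [DecidableEq V] {v : V} {c : G.Walk v v} (hc : c.IsCycle) {u : V}
    (hu : u ∈ c.support) :
    ∃ x y, x ≠ y ∧ G.Adj u x ∧ G.Adj u y ∧ x ∈ c.support ∧ y ∈ c.support := by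
  have hmem : ∀ z, z ∈ (c.rotate u hu).support → z ∈ c.support := by
    intro z hz
    rw [Walk.support_eq_cons] at hz
    rcases List.mem_cons.mp hz with rfl | hz
    · exact hu
    · exact List.mem_of_mem_tail ((Walk.support_rotate c u hu).perm.mem_iff.mp hz)
  have hd : (c.rotate u hu).IsCycle := hc.rotate hu
  revert hmem hd
  generalize c.rotate u hu = d
  intro hmem hd
  cases d with
  | nil => exact absurd hd Walk.IsCycle.not_of_nil
  | cons h q =>
    rename_i b
    rw [Walk.cons_isCycle_iff] at hd
    have hqr : ∃ (y : V) (hyu : G.Adj u y) (r : G.Walk y b), q.reverse = Walk.cons hyu r := by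
      cases hq : q.reverse with
      | nil => exact absurd h (by simp)
      | cons h' r => exact ⟨_, h', r, rfl⟩
    obtain ⟨y, hyu, r, hrev⟩ := hqr
    have hy_mem_q : y ∈ q.support := by
      have : y ∈ q.reverse.support := by rw [hrev]; simp [Walk.support_cons]
      rwa [Walk.support_reverse, List.mem_reverse] at this
    have hbney : b ≠ y := by
      rintro rfl
      have hedge : s(u, b) ∈ q.reverse.edges := by rw [hrev]; simp
      rw [Walk.edges_reverse, List.mem_reverse] at hedge
      exact hd.2 hedge
    refine ⟨b, y, hbney, h, hyu, ?_, ?_⟩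
    · exact hmem b (by simp [Walk.support_cons, Walk.start_mem_support])
    · exact hmem y (by simp [Walk.support_cons, hy_mem_q])

end AuxGeneral


/-- pair finset of a sym2 -/
def sym2Finset {V : Type*} [DecidableEq V] : Sym2 V → Finset V :=
  Sym2.lift ⟨fun a b => {a, b}, fun a b => Finset.pair_comm a b⟩

@[simp] lemma mem_sym2Finset {V : Type*} [DecidableEq V] {x a b : V} :
    x ∈ sym2Finset s(a, b) ↔ x = a ∨ x = b := by
  simp [sym2Finset]

lemma matching_verts_ncard {V : Type*} [Fintype V] [DecidableEq V] {G : SimpleGraph V}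
    {M : G.Subgraph} (h : M.IsMatching) : M.verts.ncard = 2 * M.edgeSet.ncard := by
  classical
  have huniq : ∀ {x y z : V}, M.Adj x y → M.Adj x z → y = z := by
    intro x y z hxy hxz
    obtain ⟨w, hw, hu⟩ := h (M.edge_vert hxy)
    rw [hu y hxy, hu z hxz]
  have hE : M.edgeSet.Finite := Set.toFinite _
  have hV : M.verts.Finite := Set.toFinite _
  have key : hV.toFinset = hE.toFinset.biUnion (fun e => sym2Finset e) := by
    ext x
    simp only [Set.Finite.mem_toFinset, Finset.mem_biUnion]
    constructor
    · intro hx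
      obtain ⟨w, hw, -⟩ := h hx
      exact ⟨s(x, w), (Subgraph.mem_edgeSet).2 hw, by simp⟩
    · rintro ⟨e, he, hx⟩
      induction e using Sym2.ind with
      | _ a b =>
        have hab : M.Adj a b := (Subgraph.mem_edgeSet).1 he
        rcases mem_sym2Finset.mp hx with rfl | rfl
        · exact M.edge_vert hab
        · exact M.edge_vert hab.symm
  have hdisj : ∀ e1 ∈ hE.toFinset, ∀ e2 ∈ hE.toFinset, e1 ≠ e2 →
      Disjoint (sym2Finset e1) (sym2Finset e2) := by
    intro e1 he1 e2 he2 hne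
    induction e1 using Sym2.ind with
    | _ a b =>
    induction e2 using Sym2.ind with
    | _ a' b' =>
      rw [Set.Finite.mem_toFinset, Subgraph.mem_edgeSet] at he1 he2
      rw [Finset.disjoint_left]
      intro x hx1 hx2
      apply hne
      rcases mem_sym2Finset.mp hx1 with rfl | rfl <;> rcases mem_sym2Finset.mp hx2 with rfl | rfl
      · rw [huniq he1 he2]
      · rw [huniq he1 he2.symm]; exact Sym2.eq_swap
      · rw [huniq he1.symm he2]; exact Sym2.eq_swap
      · rw [huniq he1.symm he2.symm]
  have hcard2 : ∀ e ∈ hE.toFinset, (sym2Finset e).card = 2 := by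
    intro e he
    induction e using Sym2.ind with
    | _ a b =>
      have hab : M.Adj a b := (Subgraph.mem_edgeSet).1 (hE.mem_toFinset.mp he)
      have : a ≠ b := (M.adj_sub hab).ne
      simp [sym2Finset, Finset.card_insert_of_notMem, this]
  rw [Set.ncard_eq_toFinset_card _ hV, Set.ncard_eq_toFinset_card _ hE, key,
    Finset.card_biUnion hdisj, Finset.sum_congr rfl hcard2, Finset.sum_const, smul_eq_mul,
    Nat.mul_comm]

/-- the bag of a vertex -/
def bagOf {n m : ℕ} : SatV n m → Fin n ⊕ Fin m := Sum.map Prod.fst Prod.fst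

lemma satGraph_adj {n m : ℕ} (c : Fin m → Finset (Fin n × Bool)) {x y : SatV n m} :
    (satGraph c).Adj x y ↔ x ≠ y ∧ (satRel c x y ∨ satRel c y x) := by
  simp [satGraph, fromRel_adj]

/-- a covered literal vertex has its literal in the clause -/
lemma active_of_adj {n m : ℕ} {c : Fin m → Finset (Fin n × Bool)} {j : Fin m}
    {l : Fin n × Bool} {y : SatV n m} (h : (satGraph c).Adj (Sum.inr (j, some l)) y) :
    l ∈ c j := by
  rw [satGraph_adj] at h
  obtain ⟨-, h | h⟩ := h
  · cases y with
    | inl p => exact absurd h (by simp [satRel])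
    | inr p =>
      obtain ⟨j', o'⟩ := p
      obtain ⟨rfl, -, h3, -⟩ := h
      exact h3 l rfl
  · cases y with
    | inl p =>
      obtain ⟨i, k⟩ := p
      rcases h with ⟨-, h, hm⟩ | ⟨-, h, hm⟩ <;> · rw [Option.some_inj] at h; exact h ▸ hm
    | inr p =>
      obtain ⟨j', o'⟩ := p
      obtain ⟨rfl, -, -, h4⟩ := h
      exact h4 l rfl

lemma adj_of_same_bag {n m : ℕ} {c : Fin m → Finset (Fin n × Bool)}
    {M : (satGraph c).Subgraph} (hM : M.IsMatching) {x y : SatV n m}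
    (hx : x ∈ M.verts) (hy : y ∈ M.verts) (hne : x ≠ y) (hbag : bagOf x = bagOf y) :
    (satGraph c).Adj x y := by
  have hadjx : ∃ z, (satGraph c).Adj x z := by
    obtain ⟨w, hw, -⟩ := hM hx; exact ⟨w, M.adj_sub hw⟩
  have hadjy : ∃ z, (satGraph c).Adj y z := by
    obtain ⟨w, hw, -⟩ := hM hy; exact ⟨w, M.adj_sub hw⟩
  rw [satGraph_adj]
  refine ⟨hne, ?_⟩
  cases x with
  | inl p =>
    obtain ⟨i, k⟩ := p
    cases y with
    | inl p' =>
      obtain ⟨i', k'⟩ := p'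
      simp only [bagOf, Sum.map_inl] at hbag
      have hii : i = i' := by simpa using hbag
      subst hii
      have hkk : k ≠ k' := fun h => hne (by rw [h])
      exact Or.inl ⟨rfl, hkk⟩
    | inr p' => simp [bagOf] at hbag
  | inr p =>
    obtain ⟨j, o⟩ := p
    cases y with
    | inl p' => simp [bagOf] at hbag
    | inr p' =>
      obtain ⟨j', o'⟩ := p'
      simp only [bagOf, Sum.map_inr] at hbag
      have hjj : j = j' := by simpa using hbag
      subst hjj
      have hoo : o ≠ o' := fun h => hne (by rw [h])
      refine Or.inl ⟨rfl, hoo, ?_, ?_⟩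
      · rintro l rfl
        obtain ⟨z, hz⟩ := hadjx
        exact active_of_adj hz
      · rintro l rfl
        obtain ⟨z, hz⟩ := hadjy
        exact active_of_adj hz

lemma upper_bound {n m : ℕ} (c : Fin m → Finset (Fin n × Bool))
    {M : (satGraph c).Subgraph} (hmatch : M.IsMatching)
    (hac : ((satGraph c).induce M.verts).IsAcyclic) :
    M.edgeSet.ncard ≤ n + m := by
  classical
  have hV : M.verts.Finite := Set.toFinite _
  set s : Finset (SatV n m) := hV.toFinset with hs
  have hfiber : ∀ b ∈ s.image bagOf, (s.filter (fun x => bagOf x = b)).card ≤ 2 := by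
    intro b _
    by_contra hlt
    push_neg at hlt
    obtain ⟨x, hx, y, hy, z, hz, hxy, hxz, hyz⟩ := Finset.two_lt_card.mp hlt
    simp only [Finset.mem_filter, hs, Set.Finite.mem_toFinset] at hx hy hz
    have hxy' : (satGraph c).Adj x y :=
      adj_of_same_bag hmatch hx.1 hy.1 hxy (hx.2.trans hy.2.symm)
    have hyz' : (satGraph c).Adj y z :=
      adj_of_same_bag hmatch hy.1 hz.1 hyz (hy.2.trans hz.2.symm)
    have hzx' : (satGraph c).Adj z x :=
      (adj_of_same_bag hmatch hx.1 hz.1 hxz (hx.2.trans hz.2.symm)).symm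
    have t1 : ((satGraph c).induce M.verts).Adj ⟨x, hx.1⟩ ⟨y, hy.1⟩ := hxy'
    have t2 : ((satGraph c).induce M.verts).Adj ⟨y, hy.1⟩ ⟨z, hz.1⟩ := hyz'
    have t3 : ((satGraph c).induce M.verts).Adj ⟨z, hz.1⟩ ⟨x, hx.1⟩ := hzx'
    exact not_isAcyclic_of_triangle t1 t2 t3 hac
  have hcard : s.card ≤ 2 * (n + m) := by
    calc s.card ≤ 2 * (s.image bagOf).card := Finset.card_le_mul_card_image s 2 hfiber
    _ ≤ 2 * (n + m) := by
        have h := Finset.card_le_univ (s.image bagOf)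
        simp only [Fintype.card_sum, Fintype.card_fin] at h
        omega
  have h2 : M.verts.ncard = 2 * M.edgeSet.ncard := matching_verts_ncard hmatch
  have : M.verts.ncard ≤ 2 * (n + m) := by
    rwa [Set.ncard_eq_toFinset_card _ hV]
  omega

def mRel {n m : ℕ} (ℓ : Fin m → Fin n × Bool) : SatV n m → SatV n m → Prop
  | Sum.inl (i, k), Sum.inl (i', k') => i = i' ∧ k = 0 ∧ k' = 2
  | Sum.inr (j, o), Sum.inr (j', o') => j = j' ∧ o = none ∧ o' = some (ℓ j)
  | _, _ => False

def mVertP {n m : ℕ} (ℓ : Fin m → Fin n × Bool) : SatV n m → Prop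
  | Sum.inl (_, k) => k = 0 ∨ k = 2
  | Sum.inr (j, o) => o = none ∨ o = some (ℓ j)

lemma mRel_sub {n m : ℕ} {c : Fin m → Finset (Fin n × Bool)} {ℓ : Fin m → Fin n × Bool}
    (hℓ : ∀ j, ℓ j ∈ c j) {a b : SatV n m} (h : mRel ℓ a b) : (satGraph c).Adj a b := by
  rw [satGraph_adj]
  cases a with
  | inl p =>
    obtain ⟨i, k⟩ := p
    cases b with
    | inl p' =>
      obtain ⟨i', k'⟩ := p'
      obtain ⟨rfl, rfl, rfl⟩ := h
      exact ⟨by simp, Or.inl ⟨rfl, by decide⟩⟩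
    | inr p' => exact absurd h not_false
  | inr p =>
    obtain ⟨j, o⟩ := p
    cases b with
    | inl p' => exact absurd h not_false
    | inr p' =>
      obtain ⟨j', o'⟩ := p'
      obtain ⟨rfl, rfl, rfl⟩ := h
      refine ⟨by simp, Or.inl ⟨rfl, by simp, by simp, ?_⟩⟩
      rintro l hl
      rw [Option.some_inj] at hl
      exact hl ▸ hℓ j

def mSub {n m : ℕ} (c : Fin m → Finset (Fin n × Bool)) (ℓ : Fin m → Fin n × Bool)
    (hℓ : ∀ j, ℓ j ∈ c j) : (satGraph c).Subgraph where
  verts := setOf (mVertP ℓ)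
  Adj a b := mRel ℓ a b ∨ mRel ℓ b a
  adj_sub h := by rcases h with h | h; exacts [mRel_sub hℓ h, (mRel_sub hℓ h).symm]
  edge_vert := by
    rintro a b (h | h)
    · cases a with
      | inl p =>
        obtain ⟨i, k⟩ := p
        cases b with
        | inl p' => obtain ⟨i', k'⟩ := p'; obtain ⟨-, rfl, -⟩ := h; exact Or.inl rfl
        | inr p' => exact absurd h not_false
      | inr p =>
        obtain ⟨j, o⟩ := p
        cases b with
        | inl p' => exact absurd h not_false
        | inr p' => obtain ⟨j', o'⟩ := p'; obtain ⟨-, rfl, -⟩ := h; exact Or.inl rfl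
    · cases b with
      | inl p =>
        obtain ⟨i, k⟩ := p
        cases a with
        | inl p' => obtain ⟨i', k'⟩ := p'; obtain ⟨rfl, -, rfl⟩ := h; exact Or.inr rfl
        | inr p' => exact absurd h not_false
      | inr p =>
        obtain ⟨j, o⟩ := p
        cases a with
        | inl p' => exact absurd h not_false
        | inr p' => obtain ⟨j', o'⟩ := p'; obtain ⟨rfl, -, rfl⟩ := h; exact Or.inr rfl
  symm := ⟨fun a b h => h.symm⟩

lemma mSub_isMatching {n m : ℕ} {c : Fin m → Finset (Fin n × Bool)} {ℓ : Fin m → Fin n × Bool}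
    (hℓ : ∀ j, ℓ j ∈ c j) : (mSub c ℓ hℓ).IsMatching := by
  intro v hv
  cases v with
  | inl p =>
    obtain ⟨i, k⟩ := p
    rcases hv with rfl | rfl
    · refine ⟨Sum.inl (i, 2), Or.inl ⟨rfl, rfl, rfl⟩, ?_⟩
      rintro y (h | h)
      · cases y with
        | inl p' => obtain ⟨i', k'⟩ := p'; obtain ⟨rfl, -, rfl⟩ := h; rfl
        | inr p' => exact absurd h not_false
      · cases y with
        | inl p' =>
          obtain ⟨i', k'⟩ := p'
          exact absurd h.2.2 (by decide)
        | inr p' => exact absurd h not_false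
    · refine ⟨Sum.inl (i, 0), Or.inr ⟨rfl, rfl, rfl⟩, ?_⟩
      rintro y (h | h)
      · cases y with
        | inl p' =>
          obtain ⟨i', k'⟩ := p'
          exact absurd h.2.1 (by decide)
        | inr p' => exact absurd h not_false
      · cases y with
        | inl p' => obtain ⟨i', k'⟩ := p'; obtain ⟨rfl, rfl, -⟩ := h; rfl
        | inr p' => exact absurd h not_false
  | inr p =>
    obtain ⟨j, o⟩ := p
    rcases hv with rfl | rfl
    · refine ⟨Sum.inr (j, some (ℓ j)), Or.inl ⟨rfl, rfl, rfl⟩, ?_⟩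
      rintro y (h | h)
      · cases y with
        | inl p' => exact absurd h not_false
        | inr p' => obtain ⟨j', o'⟩ := p'; obtain ⟨rfl, -, rfl⟩ := h; rfl
      · cases y with
        | inl p' => exact absurd h not_false
        | inr p' =>
          obtain ⟨j', o'⟩ := p'
          exact absurd h.2.2 (by simp)
    · refine ⟨Sum.inr (j, none), Or.inr ⟨rfl, rfl, rfl⟩, ?_⟩
      rintro y (h | h)
      · cases y with
        | inl p' => exact absurd h not_false
        | inr p' =>
          obtain ⟨j', o'⟩ := p'
          exact absurd h.2.1 (by simp)
      · cases y with
        | inl p' => exact absurd h not_false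
        | inr p' => obtain ⟨j', o'⟩ := p'; obtain ⟨rfl, rfl, -⟩ := h; rfl


lemma mSub_edge_ncard {n m : ℕ} {c : Fin m → Finset (Fin n × Bool)} {ℓ : Fin m → Fin n × Bool}
    (hℓ : ∀ j, ℓ j ∈ c j) : (mSub c ℓ hℓ).edgeSet.ncard = n + m := by
  classical
  have hf : ∀ i : Fin n, s(Sum.inl (i, 0), Sum.inl (i, 2)) ∈ (mSub c ℓ hℓ).edgeSet := by
    intro i
    rw [Subgraph.mem_edgeSet]
    exact Or.inl ⟨rfl, rfl, rfl⟩
  have hg : ∀ j : Fin m,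
      s((Sum.inr (j, none) : SatV n m), Sum.inr (j, some (ℓ j))) ∈ (mSub c ℓ hℓ).edgeSet := by
    intro j
    rw [Subgraph.mem_edgeSet]
    exact Or.inl ⟨rfl, rfl, rfl⟩
  let F : Fin n ⊕ Fin m → (mSub c ℓ hℓ).edgeSet :=
    Sum.elim (fun i => ⟨_, hf i⟩) (fun j => ⟨_, hg j⟩)
  have hinj : Function.Injective F := by
    rintro (i | j) (i' | j') h <;>
      simp only [F, Sum.elim_inl, Sum.elim_inr, Subtype.mk_eq_mk, Sym2.eq_iff] at h
    · rcases h with ⟨h1, -⟩ | ⟨h1, h2⟩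
      · rw [Sum.inl.injEq, Prod.mk.injEq] at h1; rw [h1.1]
      · exact absurd h1 (by simp)
    · rcases h with ⟨h1, -⟩ | ⟨h1, -⟩ <;> exact absurd h1 (by simp)
    · rcases h with ⟨h1, -⟩ | ⟨h1, -⟩ <;> exact absurd h1 (by simp)
    · rcases h with ⟨h1, -⟩ | ⟨h1, h2⟩
      · rw [Sum.inr.injEq, Prod.mk.injEq] at h1; rw [h1.1]
      · exact absurd h1 (by simp)
  have hsurj : Function.Surjective F := by
    rintro ⟨e, he⟩
    revert he
    refine Sym2.ind (fun a b => ?_) e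
    intro he
    rw [Subgraph.mem_edgeSet] at he
    have hmain : ∀ x y : SatV n m, mRel ℓ x y →
        ∃ p, (F p : Sym2 (SatV n m)) = s(x, y) := by
      intro x y hxy
      cases x with
      | inl p =>
        obtain ⟨i, k⟩ := p
        cases y with
        | inl p' =>
          obtain ⟨i', k'⟩ := p'
          obtain ⟨rfl, rfl, rfl⟩ := hxy
          exact ⟨Sum.inl i, rfl⟩
        | inr p' => exact absurd hxy not_false
      | inr p =>
        obtain ⟨j, o⟩ := p
        cases y with
        | inl p' => exact absurd hxy not_false
        | inr p' =>
          obtain ⟨j', o'⟩ := p'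
          obtain ⟨rfl, rfl, rfl⟩ := hxy
          exact ⟨Sum.inr j, rfl⟩
    rcases he with h | h
    · obtain ⟨p, hp⟩ := hmain a b h
      exact ⟨p, Subtype.ext hp⟩
    · obtain ⟨p, hp⟩ := hmain b a h
      exact ⟨p, Subtype.ext (hp.trans (Sym2.eq_swap))⟩
  have : Nat.card ((mSub c ℓ hℓ).edgeSet) = n + m := by
    rw [← Nat.card_congr (Equiv.ofBijective F ⟨hinj, hsurj⟩)]
    simp [Nat.card_eq_fintype_card]
  rw [← Nat.card_coe_set_eq]
  exact this

lemma mSub_acyclic {n m : ℕ} {c : Fin m → Finset (Fin n × Bool)} {ℓ : Fin m → Fin n × Bool}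
    (hℓ : ∀ j, ℓ j ∈ c j)
    (hneg : ∀ i : Fin n, (Finset.univ.filter fun j => (i, false) ∈ c j).card ≤ 1) :
    ((satGraph c).induce (mSub c ℓ hℓ).verts).IsAcyclic := by
  classical
  intro v0 cyc hcyc
  have hnbr : ∀ (x y : ↥(mSub c ℓ hℓ).verts),
      ((satGraph c).induce (mSub c ℓ hℓ).verts).Adj x y →
      (∃ i, (x.val = Sum.inl (i,0) ∧ y.val = Sum.inl (i,2)) ∨
            (x.val = Sum.inl (i,2) ∧ y.val = Sum.inl (i,0))) ∨
      (∃ j, (x.val = Sum.inr (j,none) ∧ y.val = Sum.inr (j, some (ℓ j))) ∨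
            (x.val = Sum.inr (j,some (ℓ j)) ∧ y.val = Sum.inr (j, none))) ∨
      (∃ i j, ℓ j = (i,false) ∧
            ((x.val = Sum.inl (i,0) ∧ y.val = Sum.inr (j, some (i,false))) ∨
             (x.val = Sum.inr (j, some (i,false)) ∧ y.val = Sum.inl (i,0)))) := by
    intro x y hadj
    have hadj' : (satGraph c).Adj x.val y.val := hadj
    rw [satGraph_adj] at hadj'
    obtain ⟨hne, hrel | hrel⟩ := hadj'
    · -- satRel x y
      have := x.property
      have := y.property
      clear hadj
      obtain ⟨a, ha⟩ := x
      obtain ⟨b, hb⟩ := y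
      simp only at *
      cases a with
      | inl p =>
        obtain ⟨i, k⟩ := p
        cases b with
        | inl p' =>
          obtain ⟨i', k'⟩ := p'
          obtain ⟨rfl, hkk⟩ := hrel
          rcases ha with rfl | rfl <;> rcases hb with rfl | rfl
          · exact absurd rfl hkk
          · exact Or.inl ⟨i, Or.inl ⟨rfl, rfl⟩⟩
          · exact Or.inl ⟨i, Or.inr ⟨rfl, rfl⟩⟩
          · exact absurd rfl hkk
        | inr p' =>
          obtain ⟨j, o⟩ := p'
          rcases hrel with ⟨rfl, rfl, hmem⟩ | ⟨rfl, rfl, hmem⟩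
          · rcases ha with h | h <;> exact absurd h (by simp)
          · rcases hb with h | h
            · exact absurd h (by simp)
            · rw [Option.some_inj] at h
              exact Or.inr (Or.inr ⟨i, j, h.symm, Or.inl ⟨rfl, rfl⟩⟩)
      | inr p =>
        obtain ⟨j, o⟩ := p
        cases b with
        | inl p' => exact absurd hrel not_false
        | inr p' =>
          obtain ⟨j', o'⟩ := p'
          obtain ⟨rfl, hoo, h3, h4⟩ := hrel
          rcases ha with rfl | rfl <;> rcases hb with rfl | rfl
          · exact absurd rfl hoo
          · exact Or.inr (Or.inl ⟨j, Or.inl ⟨rfl, rfl⟩⟩)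
          · exact Or.inr (Or.inl ⟨j, Or.inr ⟨rfl, rfl⟩⟩)
          · exact absurd rfl hoo
    · -- satRel y x : symmetric
      have := x.property
      have := y.property
      clear hadj
      obtain ⟨a, ha⟩ := x
      obtain ⟨b, hb⟩ := y
      simp only at *
      cases b with
      | inl p =>
        obtain ⟨i, k⟩ := p
        cases a with
        | inl p' =>
          obtain ⟨i', k'⟩ := p'
          obtain ⟨rfl, hkk⟩ := hrel
          rcases ha with rfl | rfl <;> rcases hb with rfl | rfl
          · exact absurd rfl hkk
          · exact Or.inl ⟨i, Or.inl ⟨rfl, rfl⟩⟩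
          · exact Or.inl ⟨i, Or.inr ⟨rfl, rfl⟩⟩
          · exact absurd rfl hkk
        | inr p' =>
          obtain ⟨j, o⟩ := p'
          rcases hrel with ⟨rfl, rfl, hmem⟩ | ⟨rfl, rfl, hmem⟩
          · rcases hb with h | h <;> exact absurd h (by simp)
          · rcases ha with h | h
            · exact absurd h (by simp)
            · rw [Option.some_inj] at h
              exact Or.inr (Or.inr ⟨i, j, h.symm, Or.inr ⟨rfl, rfl⟩⟩)
      | inr p =>
        obtain ⟨j, o⟩ := p
        cases a with
        | inl p' => exact absurd hrel not_false
        | inr p' =>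
          obtain ⟨j', o'⟩ := p'
          obtain ⟨rfl, hoo, h3, h4⟩ := hrel
          rcases ha with rfl | rfl <;> rcases hb with rfl | rfl
          · exact absurd rfl hoo
          · exact Or.inr (Or.inl ⟨j, Or.inl ⟨rfl, rfl⟩⟩)
          · exact Or.inr (Or.inl ⟨j, Or.inr ⟨rfl, rfl⟩⟩)
          · exact absurd rfl hoo
  -- Step A : u_i vertices are not on the cycle
  have stepA : ∀ (x : ↥(mSub c ℓ hℓ).verts) (i : Fin n),
      x.val = Sum.inl (i, 2) → x ∉ cyc.support := by
    intro x i hx hmem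
    obtain ⟨a, b, hab, hxa, hxb, -, -⟩ := exists_two_neighbors hcyc hmem
    have hav : a.val = Sum.inl (i, 0) := by
      rcases hnbr x a hxa with ⟨i', ⟨h1, h2⟩ | ⟨h1, h2⟩⟩ | ⟨j', ⟨h1, h2⟩ | ⟨h1, h2⟩⟩ |
        ⟨i', j', hl, ⟨h1, h2⟩ | ⟨h1, h2⟩⟩ <;> rw [hx] at h1 <;>
        simp at h1 <;> (subst h1; exact h2)
    have hbv : b.val = Sum.inl (i, 0) := by
      rcases hnbr x b hxb with ⟨i', ⟨h1, h2⟩ | ⟨h1, h2⟩⟩ | ⟨j', ⟨h1, h2⟩ | ⟨h1, h2⟩⟩ |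
        ⟨i', j', hl, ⟨h1, h2⟩ | ⟨h1, h2⟩⟩ <;> rw [hx] at h1 <;>
        simp at h1 <;> (subst h1; exact h2)
    exact hab (Subtype.ext (hav.trans hbv.symm))
  -- Step B : v_j vertices are not on the cycle
  have stepB : ∀ (x : ↥(mSub c ℓ hℓ).verts) (j : Fin m),
      x.val = Sum.inr (j, none) → x ∉ cyc.support := by
    intro x j hx hmem
    obtain ⟨a, b, hab, hxa, hxb, -, -⟩ := exists_two_neighbors hcyc hmem
    have hav : a.val = Sum.inr (j, some (ℓ j)) := by
      rcases hnbr x a hxa with ⟨i', ⟨h1, h2⟩ | ⟨h1, h2⟩⟩ | ⟨j', ⟨h1, h2⟩ | ⟨h1, h2⟩⟩ |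
        ⟨i', j', hl, ⟨h1, h2⟩ | ⟨h1, h2⟩⟩ <;> rw [hx] at h1 <;>
        simp at h1 <;> (subst h1; exact h2)
    have hbv : b.val = Sum.inr (j, some (ℓ j)) := by
      rcases hnbr x b hxb with ⟨i', ⟨h1, h2⟩ | ⟨h1, h2⟩⟩ | ⟨j', ⟨h1, h2⟩ | ⟨h1, h2⟩⟩ |
        ⟨i', j', hl, ⟨h1, h2⟩ | ⟨h1, h2⟩⟩ <;> rw [hx] at h1 <;>
        simp at h1 <;> (subst h1; exact h2)
    exact hab (Subtype.ext (hav.trans hbv.symm))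
  -- Step C : t_i vertices are not on the cycle
  have stepC : ∀ (x : ↥(mSub c ℓ hℓ).verts) (i : Fin n),
      x.val = Sum.inl (i, 0) → x ∉ cyc.support := by
    intro x i hx hmem
    obtain ⟨a, b, hab, hxa, hxb, has, hbs⟩ := exists_two_neighbors hcyc hmem
    have hform : ∀ y : ↥(mSub c ℓ hℓ).verts,
        ((satGraph c).induce (mSub c ℓ hℓ).verts).Adj x y →
        y.val = Sum.inl (i, 2) ∨
        (∃ j, ℓ j = (i, false) ∧ y.val = Sum.inr (j, some (i, false))) := by
      intro y hy
      rcases hnbr x y hy with ⟨i', ⟨h1, h2⟩ | ⟨h1, h2⟩⟩ | ⟨j', ⟨h1, h2⟩ | ⟨h1, h2⟩⟩ |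
        ⟨i', j', hl, ⟨h1, h2⟩ | ⟨h1, h2⟩⟩ <;> rw [hx] at h1 <;> simp at h1
      · subst h1; exact Or.inl h2
      · subst h1; exact Or.inr ⟨j', hl, h2⟩
    have key : ∀ y : ↥(mSub c ℓ hℓ).verts,
        ((satGraph c).induce (mSub c ℓ hℓ).verts).Adj x y → y ∈ cyc.support →
        ∃ j, ℓ j = (i, false) ∧ y.val = Sum.inr (j, some (i, false)) := by
      intro y hy hys
      rcases hform y hy with h | h
      · exact absurd hys (stepA y i h)
      · exact h
    obtain ⟨j1, hl1, ha⟩ := key a hxa has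
    obtain ⟨j2, hl2, hb⟩ := key b hxb hbs
    have hjj : j1 = j2 := by
      refine Finset.card_le_one.mp (hneg i) j1 ?_ j2 ?_ <;>
        simp only [Finset.mem_filter, Finset.mem_univ, true_and]
      · exact hl1 ▸ hℓ j1
      · exact hl2 ▸ hℓ j2
    subst hjj
    exact hab (Subtype.ext (ha.trans hb.symm))
  -- Step D : literal vertices are not on the cycle
  have stepD : ∀ (x : ↥(mSub c ℓ hℓ).verts) (j : Fin m) (l : Fin n × Bool),
      x.val = Sum.inr (j, some l) → x ∉ cyc.support := by
    intro x j l hx hmem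
    obtain ⟨a, b, hab, hxa, hxb, has, hbs⟩ := exists_two_neighbors hcyc hmem
    have hform : ∀ y : ↥(mSub c ℓ hℓ).verts,
        ((satGraph c).induce (mSub c ℓ hℓ).verts).Adj x y →
        y.val = Sum.inr (j, none) ∨
        (∃ i, l = (i, false) ∧ y.val = Sum.inl (i, 0)) := by
      intro y hy
      rcases hnbr x y hy with ⟨i', ⟨h1, h2⟩ | ⟨h1, h2⟩⟩ | ⟨j', ⟨h1, h2⟩ | ⟨h1, h2⟩⟩ |
        ⟨i', j', hl, ⟨h1, h2⟩ | ⟨h1, h2⟩⟩ <;> rw [hx] at h1 <;> simp at h1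
      · obtain ⟨rfl, -⟩ := h1; exact Or.inl h2
      · obtain ⟨rfl, rfl⟩ := h1; exact Or.inr ⟨i', rfl, h2⟩
    have key : ∀ y : ↥(mSub c ℓ hℓ).verts,
        ((satGraph c).induce (mSub c ℓ hℓ).verts).Adj x y → y ∈ cyc.support →
        ∃ i, l = (i, false) ∧ y.val = Sum.inl (i, 0) := by
      intro y hy hys
      rcases hform y hy with h | h
      · exact absurd hys (stepB y j h)
      · exact h
    obtain ⟨i1, hl1, ha⟩ := key a hxa has
    obtain ⟨i2, hl2, hb⟩ := key b hxb hbs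
    have hii : i1 = i2 := by
      rw [hl1] at hl2
      exact (Prod.ext_iff.mp hl2).1
    subst hii
    exact hab (Subtype.ext (ha.trans hb.symm))
  -- conclude
  have hstart : v0 ∈ cyc.support := Walk.start_mem_support cyc
  rcases hv0 : (v0 : SatV n m) with ⟨i, k⟩ | ⟨j, o⟩
  · have hp : k = 0 ∨ k = 2 := by
      have hp : mVertP ℓ ↑v0 := v0.property
      rw [hv0] at hp
      exact hp
    rcases hp with rfl | rfl
    · exact stepC v0 i hv0 hstart
    · exact stepA v0 i hv0 hstart
  · have hp : o = none ∨ o = some (ℓ j) := by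
      have hp : mVertP ℓ ↑v0 := v0.property
      rw [hv0] at hp
      exact hp
    rcases hp with rfl | rfl
    · exact stepB v0 j hv0 hstart
    · exact stepD v0 j (ℓ j) hv0 hstart

/-- The graph `G(Γ)` satisfies `ν_ac(G(Γ)) = n + m`. -/
theorem nuAc_satGraph {n m : ℕ} (c : Fin m → Finset (Fin n × Bool))
    (hsize : ∀ j, (c j).card = 2 ∨ (c j).card = 3)
    (hpos : ∀ i : Fin n, (Finset.univ.filter fun j => (i, true) ∈ c j).card ≤ 2)
    (hneg : ∀ i : Fin n, (Finset.univ.filter fun j => (i, false) ∈ c j).card ≤ 1)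
    (hcon : ∀ j, ∀ i : Fin n, ¬((i, true) ∈ c j ∧ (i, false) ∈ c j)) :
    nuAc (satGraph c) = n + m := by
  classical
  have hne : ∀ j, (c j).Nonempty := fun j =>
    Finset.card_pos.mp (by rcases hsize j with h | h <;> omega)
  set ℓ : Fin m → Fin n × Bool := fun j => (hne j).choose with hℓdef
  have hℓ : ∀ j, ℓ j ∈ c j := fun j => (hne j).choose_spec
  have hmem : (n + m) ∈ {k : ℕ | ∃ M : (satGraph c).Subgraph,
      IsAcyclicMatching (satGraph c) M ∧ M.edgeSet.ncard = k} :=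
    ⟨mSub c ℓ hℓ, ⟨mSub_isMatching hℓ, mSub_acyclic hℓ hneg⟩, mSub_edge_ncard hℓ⟩
  have hub : ∀ k ∈ {k : ℕ | ∃ M : (satGraph c).Subgraph,
      IsAcyclicMatching (satGraph c) M ∧ M.edgeSet.ncard = k}, k ≤ n + m := by
    rintro k ⟨M, ⟨hm, hac⟩, rfl⟩
    exact upper_bound c hm hac
  rw [nuAc]
  exact IsGreatest.csSup_eq ⟨hmem, hub⟩
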